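/- Let H₀ be a mirror-symmetric real symmetric tridiagonal matrix with zero diagonal, positive couplings, and perfect state transfer at time t₀ (so e^{-iH₀t₀}|1⟩ = e^{iφ}|N⟩ for some phase φ). Then for all t, |⟨N| e^{-iH₀(t₀+δ)} |1⟩| = |⟨1| e^{-iH₀δ} |1⟩|, so to second order in δ the fidelity loss is governed by ⟨1|H₀²|1⟩ = J₁²: specifically |⟨N|e^{-iH₀(t₀+δ)}|1⟩| ≥ 1 − J₁²δ²/2. -/

import Mathlib

open Matrix

lemma aux_unitary {n : Type*} [Fintype n] [DecidableEq n] {H : Matrix n n ℂ}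
    (hH : H.IsHermitian) (r : ℝ) :
    NormedSpace.exp ((-(Complex.I * r)) • H) *
      (NormedSpace.exp ((-(Complex.I * r)) • H))ᴴ = 1 := by
  have h1 : ((-(Complex.I * r)) • H)ᴴ = (Complex.I * r) • H := by
    rw [conjTranspose_smul, hH.eq]
    congr 1
    simp [Complex.ext_iff]
  rw [← Matrix.exp_conjTranspose, h1, ← Matrix.exp_add_of_commute _ _
    (((Commute.refl H).smul_left _).smul_right _)]
  rw [← add_smul]
  simp [NormedSpace.exp_zero]

lemma aux_diag {n : Type*} [Fintype n] [DecidableEq n] {H : Matrix n n ℂ}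
    (hH : H.IsHermitian) (i : n) (s : ℝ) :
    1 - ((H * H) i i).re * s ^ 2 / 2 ≤
      ((NormedSpace.exp ((-(Complex.I * s)) • H)) i i).re := by
  set W : Matrix n n ℂ := (hH.eigenvectorUnitary : Matrix n n ℂ) with hWdef
  set μ : n → ℝ := hH.eigenvalues with hμdef
  have hW1 : W * star W = 1 := (Matrix.mem_unitaryGroup_iff).mp hH.eigenvectorUnitary.2
  have hW2 : star W * W = 1 := (Matrix.mem_unitaryGroup_iff').mp hH.eigenvectorUnitary.2
  have hWu : IsUnit W := ⟨⟨W, star W, hW1, hW2⟩, rfl⟩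
  have hWinv : W⁻¹ = star W := Matrix.inv_eq_left_inv hW2
  have hspec : H = W * diagonal (fun k => (μ k : ℂ)) * star W := by
    simpa [Function.comp_def] using hH.spectral_theorem
  -- exp formula
  have hexp : NormedSpace.exp ((-(Complex.I * s)) • H) =
      W * diagonal (fun k => Complex.exp (-(Complex.I * s) * μ k)) * star W := by
    have h1 : (-(Complex.I * s)) • H =
        W * ((-(Complex.I * s)) • diagonal (fun k => (μ k : ℂ))) * W⁻¹ := by
      rw [hWinv]
      conv_lhs => rw [hspec]
      rw [Matrix.mul_smul, Matrix.smul_mul]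
    rw [h1, Matrix.exp_conj _ _ hWu, hWinv]
    congr 2
    rw [← diagonal_smul, Matrix.exp_diagonal]
    congr 1
    funext k
    rw [Pi.exp_def]
    simp [← Complex.exp_eq_exp_ℂ]
  -- squared formula
  have hsq : H * H = W * diagonal (fun k => ((μ k : ℂ))^2) * star W := by
    conv_lhs => rw [hspec]
    have h2 : (W * diagonal (fun k => (μ k : ℂ)) * star W) *
        (W * diagonal (fun k => (μ k : ℂ)) * star W) =
        W * ((diagonal (fun k => (μ k : ℂ)) * ((star W * W) *
          diagonal (fun k => (μ k : ℂ)))) * star W) := by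
      noncomm_ring
    rw [h2, hW2, Matrix.one_mul, diagonal_mul_diagonal, ← Matrix.mul_assoc]
    congr 2
    funext k
    ring
  -- entry of W * diagonal d * star W
  have hentry : ∀ (d : n → ℂ), (W * diagonal d * star W) i i
      = ∑ k, (Complex.normSq (W i k) : ℂ) * d k := by
    intro d
    rw [Matrix.mul_apply]
    congr 1
    funext k
    rw [Matrix.mul_diagonal, Matrix.star_apply, Complex.star_def, mul_right_comm,
      Complex.mul_conj]
  have hsum1 : ∑ k, Complex.normSq (W i k) = 1 := by
    have := congrFun (congrFun hW1 i) i
    rw [Matrix.mul_apply, Matrix.one_apply_eq] at this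
    have : ∑ k, (Complex.normSq (W i k) : ℂ) = 1 := by
      rw [← this]
      congr 1; funext k
      rw [Matrix.star_apply, Complex.star_def, Complex.mul_conj]
    exact_mod_cast this
  have hsum2 : ((H * H) i i).re = ∑ k, Complex.normSq (W i k) * (μ k)^2 := by
    rw [hsq, hentry]
    have h3 : ∀ k, (Complex.normSq (W i k) : ℂ) * (μ k : ℂ)^2 =
        ((Complex.normSq (W i k) * (μ k)^2 : ℝ) : ℂ) := by
      intro k; push_cast; ring
    simp_rw [h3, ← Complex.ofReal_sum, Complex.ofReal_re]
  -- main computation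
  have hre : ((NormedSpace.exp ((-(Complex.I * s)) • H)) i i).re =
      ∑ k, Complex.normSq (W i k) * Real.cos (s * μ k) := by
    rw [hexp, hentry, Complex.re_sum]
    congr 1; funext k
    have h4 : -(Complex.I * s) * (μ k : ℂ) = ((-(s * μ k) : ℝ) : ℂ) * Complex.I := by
      push_cast; ring
    rw [h4, Complex.re_ofReal_mul, Complex.exp_ofReal_mul_I_re, Real.cos_neg]
  rw [hre, hsum2]
  have step : ∀ k : n, Complex.normSq (W i k) * (1 - (s * μ k)^2 / 2) ≤
      Complex.normSq (W i k) * Real.cos (s * μ k) := by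
    intro k
    exact mul_le_mul_of_nonneg_left (Real.one_sub_sq_div_two_le_cos) (Complex.normSq_nonneg _)
  have h5 : (∑ k, Complex.normSq (W i k) * (μ k)^2) * s ^ 2 / 2 =
      ∑ k, Complex.normSq (W i k) * ((s * μ k)^2 / 2) := by
    rw [Finset.sum_mul, Finset.sum_div]
    congr 1; funext k; ring
  calc 1 - (∑ k, Complex.normSq (W i k) * (μ k)^2) * s ^ 2 / 2
      = ∑ k, Complex.normSq (W i k) * (1 - (s * μ k)^2 / 2) := by
        simp_rw [mul_sub, mul_one, Finset.sum_sub_distrib, hsum1, h5]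
    _ ≤ ∑ k, Complex.normSq (W i k) * Real.cos (s * μ k) :=
        Finset.sum_le_sum (fun k _ => step k)

/-- For a field-free real symmetric tridiagonal chain with perfect state transfer at
time `t₀` (first column of `e^{-iH₀t₀}` is `e^{iφ}` times the last basis vector),
for every `δ`, `|⟨N|e^{-iH₀(t₀+δ)}|1⟩| = |⟨1|e^{-iH₀δ}|1⟩|`, and
`|⟨N|e^{-iH₀(t₀+δ)}|1⟩| ≥ 1 − J₁²δ²/2`. -/
theorem stmt9 (N : ℕ) (hN : 2 ≤ N) (J : ℕ → ℝ)
    (hJ : ∀ k, k + 1 < N → 0 < J k)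
    (H : Matrix (Fin N) (Fin N) ℂ)
    (hH : ∀ i j : Fin N, H i j =
      if (i : ℕ) + 1 = (j : ℕ) then (J i : ℂ)
      else if (j : ℕ) + 1 = (i : ℕ) then (J j : ℂ) else 0)
    (t₀ φ : ℝ)
    (hPST : (NormedSpace.exp ((-(Complex.I * t₀)) • H)) *ᵥ
        (Pi.single (⟨0, by omega⟩ : Fin N) 1 : Fin N → ℂ) =
      Complex.exp (Complex.I * φ) • (Pi.single (⟨N-1, by omega⟩ : Fin N) 1 : Fin N → ℂ)) :
    ∀ δ : ℝ,
      ‖(NormedSpace.exp ((-(Complex.I * (t₀ + δ))) • H))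
          ⟨N-1, by omega⟩ ⟨0, by omega⟩‖ =
        ‖(NormedSpace.exp ((-(Complex.I * δ)) • H)) ⟨0, by omega⟩ ⟨0, by omega⟩‖ ∧
      ‖(NormedSpace.exp ((-(Complex.I * (t₀ + δ))) • H))
          ⟨N-1, by omega⟩ ⟨0, by omega⟩‖ ≥ 1 - (J 0)^2 * δ^2 / 2 := by
  intro δ
  have hN0 : 0 < N := by omega
  set i0 : Fin N := ⟨0, by omega⟩ with hi0def
  set iN : Fin N := ⟨N - 1, by omega⟩ with hiNdef
  set i1 : Fin N := ⟨1, by omega⟩ with hi1def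
  have hHerm : H.IsHermitian := by
    ext i j
    rw [conjTranspose_apply, hH j i, hH i j]
    split_ifs <;> first | omega | simp [Complex.star_def, Complex.conj_ofReal]
  set U := NormedSpace.exp ((-(Complex.I * t₀)) • H) with hUdef
  set V := NormedSpace.exp ((-(Complex.I * δ)) • H) with hVdef
  have hUU : U * Uᴴ = 1 := aux_unitary hHerm t₀
  have hPST' : U *ᵥ (Pi.single i0 1 : Fin N → ℂ) =
      Complex.exp (Complex.I * φ) • (Pi.single iN 1 : Fin N → ℂ) := hPST
  have hUcol : ∀ i : Fin N, U i i0 =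
      Complex.exp (Complex.I * φ) * (Pi.single iN 1 : Fin N → ℂ) i := by
    intro i
    have := congrFun hPST' i
    simpa [Matrix.mulVec_single] using this
  have hUNN : U iN i0 = Complex.exp (Complex.I * φ) := by
    simpa using hUcol iN
  have habs1 : ‖Complex.exp (Complex.I * φ)‖ = 1 := by
    rw [Complex.norm_exp]
    simp
  have hns : Complex.normSq (U iN i0) = 1 := by
    rw [hUNN, Complex.normSq_eq_norm_sq, habs1, one_pow]
  have hrowsum : ∑ k, Complex.normSq (U iN k) = 1 := by
    have h1 := congrFun (congrFun hUU iN) iN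
    rw [Matrix.mul_apply, Matrix.one_apply_eq] at h1
    have h2 : ∑ k, (Complex.normSq (U iN k) : ℂ) = 1 := by
      rw [← h1]
      congr 1; funext k
      rw [Matrix.conjTranspose_apply, Complex.star_def, Complex.mul_conj]
    exact_mod_cast h2
  have hzero : ∀ k, k ≠ i0 → U iN k = 0 := by
    intro k hk
    have h3 := Finset.sum_erase_add Finset.univ
      (fun k => Complex.normSq (U iN k)) (Finset.mem_univ i0)
    rw [hrowsum] at h3
    have hsum0 : ∑ k ∈ Finset.univ.erase i0, Complex.normSq (U iN k) = 0 := by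
      have := hns
      linarith
    have h4 := (Finset.sum_eq_zero_iff_of_nonneg
      (fun k _ => Complex.normSq_nonneg (U iN k))).mp hsum0 k
      (Finset.mem_erase.mpr ⟨hk, Finset.mem_univ k⟩)
    exact Complex.normSq_eq_zero.mp h4
  have hW : NormedSpace.exp ((-(Complex.I * ((t₀ : ℂ) + (δ : ℂ)))) • H) = U * V := by
    rw [show (-(Complex.I * ((t₀ : ℂ) + (δ : ℂ)))) • H =
        (-(Complex.I * t₀)) • H + (-(Complex.I * δ)) • H by
      rw [← add_smul]; congr 1; push_cast; ring]
    exact Matrix.exp_add_of_commute _ _ (((Commute.refl H).smul_left _).smul_right _)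
  have hWentry : (NormedSpace.exp ((-(Complex.I * ((t₀ : ℂ) + (δ : ℂ)))) • H)) iN i0 =
      Complex.exp (Complex.I * φ) * V i0 i0 := by
    rw [hW, Matrix.mul_apply, Finset.sum_eq_single i0]
    · rw [hUNN]
    · intro k _ hk
      rw [hzero k hk, zero_mul]
    · simp
  have hHH : ((H * H) i0 i0).re = (J 0) ^ 2 := by
    rw [Matrix.mul_apply, Finset.sum_eq_single i1]
    · rw [hH i0 i1, hH i1 i0]
      have e1 : (i0 : ℕ) + 1 = (i1 : ℕ) := by simp [hi0def, hi1def]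
      have e2 : ¬((i1 : ℕ) + 1 = (i0 : ℕ)) := by simp
      rw [if_pos e1, if_neg e2, if_pos e1]
      rw [← Complex.ofReal_mul, Complex.ofReal_re]
      ring
    · intro j _ hj
      have e1 : ¬((i0 : ℕ) + 1 = (j : ℕ)) := by
        simp only [Fin.ne_iff_vne] at hj
        simp [hi0def, hi1def] at hj ⊢
        omega
      have e2 : ¬((j : ℕ) + 1 = (i0 : ℕ)) := by simp
      rw [hH i0 j, if_neg e1, if_neg e2, zero_mul]
    · simp
  constructor
  · rw [hWentry, norm_mul, habs1, one_mul]
  · rw [hWentry, norm_mul, habs1, one_mul]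
    have h5 := aux_diag hHerm i0 δ
    rw [hHH] at h5
    calc (1 : ℝ) - (J 0) ^ 2 * δ ^ 2 / 2 ≤ (V i0 i0).re := by
          have : (J 0) ^ 2 * δ ^ 2 / 2 = (J 0) ^ 2 * δ ^ 2 / 2 := rfl
          linarith
      _ ≤ ‖V i0 i0‖ := Complex.re_le_norm _
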